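/- arXiv:1806.00032 — 2 statements merged into one kernel-verified Lean document; each statement's English description precedes it below -/
import Mathlib

section
/- For all real numbers a₁, a₂, all natural numbers n₁, n₂, and every real number x, the recurrence (a₂ - a₁) · C_{n₁,n₂}^{(a₁,a₂)}(x) = C_{n₁+1,n₂}^{(a₁,a₂)}(x) - C_{n₁,n₂+1}^{(a₁,a₂)}(x) holds. -/
/-- The falling factorial `x⁽ⁿ⁾ = x(x-1)⋯(x-n+1)`. -/
noncomputable def fallingFactorial (x : ℝ) (n : ℕ) : ℝ :=
  ∏ j ∈ Finset.range n, (x - j)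

/-- The multiple Charlier polynomial `C_{n₁,n₂}^{(a₁,a₂)}(x)`. -/
noncomputable def charlier (a₁ a₂ : ℝ) (n₁ n₂ : ℕ) (x : ℝ) : ℝ :=
  ∑ k ∈ Finset.range (n₁ + 1), ∑ l ∈ Finset.range (n₂ + 1),
    (n₁.choose k : ℝ) * (n₂.choose l : ℝ) * (-a₁) ^ (n₁ - k) * (-a₂) ^ (n₂ - l) *
      fallingFactorial x (k + l)

lemma key (a : ℝ) (n : ℕ) (f : ℕ → ℝ) :
    ∑ k ∈ Finset.range (n+2), (Nat.choose (n+1) k : ℝ) * (-a)^(n+1-k) * f k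
    = -a * ∑ k ∈ Finset.range (n+1), (Nat.choose n k : ℝ) * (-a)^(n-k) * f k
      + ∑ k ∈ Finset.range (n+1), (Nat.choose n k : ℝ) * (-a)^(n-k) * f (k+1) := by
  have h2 : ∑ k ∈ Finset.range (n+1), (Nat.choose n (k+1) : ℝ) * (-a)^(n-k) * f (k+1)
      = (∑ k ∈ Finset.range (n+1), (Nat.choose n k : ℝ) * (-a)^(n+1-k) * f k)
        - (-a)^(n+1) * f 0 := by
    have := Finset.sum_range_succ'
      (fun k => (Nat.choose n k : ℝ) * (-a)^(n+1-k) * f k) (n+1)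
    simp only [Nat.succ_sub_succ] at this
    rw [Finset.sum_range_succ] at this
    simp at this
    rw [this]; ring
  rw [Finset.sum_range_succ'
      (fun k => (Nat.choose (n+1) k : ℝ) * (-a)^(n+1-k) * f k)]
  simp only [Nat.succ_sub_succ]
  have h1 : ∀ k ∈ Finset.range (n+1),
      (Nat.choose (n+1) (k+1) : ℝ) * (-a)^(n-k) * f (k+1)
      = (Nat.choose n k : ℝ) * (-a)^(n-k) * f (k+1)
        + (Nat.choose n (k+1) : ℝ) * (-a)^(n-k) * f (k+1) := by
    intro k _
    rw [Nat.choose_succ_succ]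
    push_cast
    ring
  rw [Finset.sum_congr rfl h1, Finset.sum_add_distrib, h2]
  have h3 : ∑ k ∈ Finset.range (n+1), (Nat.choose n k : ℝ) * (-a)^(n+1-k) * f k
      = -a * ∑ k ∈ Finset.range (n+1), (Nat.choose n k : ℝ) * (-a)^(n-k) * f k := by
    rw [Finset.mul_sum]
    refine Finset.sum_congr rfl fun k hk => ?_
    rw [Finset.mem_range] at hk
    have : n + 1 - k = (n - k) + 1 := by omega
    rw [this, pow_succ]
    ring
  rw [h3]
  simp [Nat.choose_zero_right]
  ring

lemma charlier_eq (a₁ a₂ : ℝ) (m₁ m₂ : ℕ) (x : ℝ) :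
    charlier a₁ a₂ m₁ m₂ x
      = ∑ k ∈ Finset.range (m₁+1), (m₁.choose k : ℝ) * (-a₁)^(m₁-k)
          * ∑ l ∈ Finset.range (m₂+1),
              (m₂.choose l : ℝ) * (-a₂)^(m₂-l) * fallingFactorial x (k+l) := by
  unfold charlier
  refine Finset.sum_congr rfl fun k _ => ?_
  rw [Finset.mul_sum]
  refine Finset.sum_congr rfl fun l _ => ?_
  ring

lemma charlier_eq' (a₁ a₂ : ℝ) (m₁ m₂ : ℕ) (x : ℝ) :
    charlier a₁ a₂ m₁ m₂ x
      = ∑ l ∈ Finset.range (m₂+1), (m₂.choose l : ℝ) * (-a₂)^(m₂-l)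
          * ∑ k ∈ Finset.range (m₁+1),
              (m₁.choose k : ℝ) * (-a₁)^(m₁-k) * fallingFactorial x (k+l) := by
  rw [charlier_eq]
  simp only [Finset.mul_sum]
  rw [Finset.sum_comm]
  refine Finset.sum_congr rfl fun l _ => Finset.sum_congr rfl fun k _ => ?_
  ring

/-- The recurrence `(a₂-a₁) C_{n₁,n₂} = C_{n₁+1,n₂} - C_{n₁,n₂+1}`. -/
theorem charlier_recurrence_diff (a₁ a₂ : ℝ) (n₁ n₂ : ℕ) (x : ℝ) :
    (a₂ - a₁) * charlier a₁ a₂ n₁ n₂ x =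
      charlier a₁ a₂ (n₁ + 1) n₂ x - charlier a₁ a₂ n₁ (n₂ + 1) x := by
  set S : ℝ := ∑ k ∈ Finset.range (n₁+1), (n₁.choose k : ℝ) * (-a₁)^(n₁-k)
      * ∑ l ∈ Finset.range (n₂+1),
          (n₂.choose l : ℝ) * (-a₂)^(n₂-l) * fallingFactorial x (k+1+l) with hS
  have L : charlier a₁ a₂ (n₁+1) n₂ x = -a₁ * charlier a₁ a₂ n₁ n₂ x + S := by
    rw [charlier_eq a₁ a₂ (n₁+1) n₂ x,
      key a₁ n₁ (fun k => ∑ l ∈ Finset.range (n₂+1),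
        (n₂.choose l : ℝ) * (-a₂)^(n₂-l) * fallingFactorial x (k+l)),
      ← charlier_eq a₁ a₂ n₁ n₂ x, hS]
  have R : charlier a₁ a₂ n₁ (n₂+1) x = -a₂ * charlier a₁ a₂ n₁ n₂ x + S := by
    rw [charlier_eq' a₁ a₂ n₁ (n₂+1) x,
      key a₂ n₂ (fun l => ∑ k ∈ Finset.range (n₁+1),
        (n₁.choose k : ℝ) * (-a₁)^(n₁-k) * fallingFactorial x (k+l)),
      ← charlier_eq' a₁ a₂ n₁ n₂ x, hS]
    congr 1
    simp only [Finset.mul_sum]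
    rw [Finset.sum_comm]
    refine Finset.sum_congr rfl fun k _ => Finset.sum_congr rfl fun l _ => ?_
    have : k + 1 + l = k + (l + 1) := by omega
    rw [this]
    ring
  rw [L, R]
  ring
end

section
/- For all real numbers a₁, a₂, all natural numbers n₁, n₂, and every real number x, the multiple Charlier polynomials satisfy the Δ-Appell relation C_{n₁,n₂}^{(a₁,a₂)}(x+1) - C_{n₁,n₂}^{(a₁,a₂)}(x) = n₁ · C_{n₁-1,n₂}^{(a₁,a₂)}(x) + n₂ · C_{n₁,n₂-1}^{(a₁,a₂)}(x), where a term whose index would be negative is zero (its coefficient n_i vanishes). -/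
lemma ff_succ (x : ℝ) (n : ℕ) : fallingFactorial x (n+1) = fallingFactorial x n * (x - n) := by
  simp [fallingFactorial, Finset.prod_range_succ]

lemma ff_succ' (x : ℝ) (n : ℕ) : fallingFactorial (x+1) (n+1) = (x+1) * fallingFactorial x n := by
  unfold fallingFactorial
  rw [Finset.prod_range_succ']
  simp only [Nat.cast_zero, sub_zero]
  rw [mul_comm]
  congr 1
  apply Finset.prod_congr rfl
  intro j _
  push_cast
  ring

lemma ff_delta (x : ℝ) (n : ℕ) :
    fallingFactorial (x+1) n - fallingFactorial x n = (n : ℝ) * fallingFactorial x (n-1) := by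
  cases n with
  | zero => simp [fallingFactorial]
  | succ m =>
    rw [ff_succ', ff_succ]
    simp only [Nat.add_sub_cancel]
    push_cast
    ring

lemma sum_k (n m : ℕ) (a b x : ℝ) :
    ∑ k ∈ Finset.range (n+1), ∑ l ∈ Finset.range (m+1),
      (n.choose k : ℝ) * (m.choose l : ℝ) * (-a) ^ (n-k) * (-b) ^ (m-l) *
        ((k : ℝ) * fallingFactorial x (k+l-1))
    = (n : ℝ) * charlier a b (n-1) m x := by
  cases n with
  | zero => simp
  | succ p =>
    rw [Finset.sum_range_succ']
    simp only [Nat.cast_zero, zero_mul, mul_zero, Finset.sum_const_zero, add_zero]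
    simp only [Nat.add_sub_cancel, charlier, Finset.mul_sum]
    apply Finset.sum_congr rfl
    intro k _
    apply Finset.sum_congr rfl
    intro l _
    have h1 : (p+1).choose (k+1) * (k+1) = (p+1) * p.choose k := by
      rw [mul_comm (p+1) _, ← Nat.add_one_mul_choose_eq]
      ring
    have h2 : ((p+1).choose (k+1) : ℝ) * (k+1 : ℝ) = ((p:ℝ)+1) * (p.choose k : ℝ) := by
      have := congrArg (fun t : ℕ => (t : ℝ)) h1
      push_cast at this
      linarith [this]
    have h3 : p + 1 - (k + 1) = p - k := by omega
    have h4 : k + 1 + l - 1 = k + l := by omega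
    rw [h3, h4]
    push_cast
    linear_combination h2 * ((m.choose l : ℝ) * (-a) ^ (p - k) * (-b) ^ (m - l) * fallingFactorial x (k + l))

lemma charlier_symm (a b : ℝ) (n m : ℕ) (x : ℝ) :
    charlier a b n m x = charlier b a m n x := by
  unfold charlier
  rw [Finset.sum_comm]
  apply Finset.sum_congr rfl; intro l _
  apply Finset.sum_congr rfl; intro k _
  rw [Nat.add_comm l k]
  ring

/-- The Δ-Appell relation for multiple Charlier polynomials:
  `C_{n₁,n₂}(x+1) - C_{n₁,n₂}(x) = n₁ C_{n₁-1,n₂}(x) + n₂ C_{n₁,n₂-1}(x)`;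
  a term whose index would be negative is zero since its coefficient `nᵢ` vanishes. -/
theorem charlier_delta_appell (a₁ a₂ : ℝ) (n₁ n₂ : ℕ) (x : ℝ) :
    charlier a₁ a₂ n₁ n₂ (x + 1) - charlier a₁ a₂ n₁ n₂ x =
      (n₁ : ℝ) * charlier a₁ a₂ (n₁ - 1) n₂ x
        + (n₂ : ℝ) * charlier a₁ a₂ n₁ (n₂ - 1) x := by
  have key : charlier a₁ a₂ n₁ n₂ (x + 1) - charlier a₁ a₂ n₁ n₂ x =
      (∑ k ∈ Finset.range (n₁+1), ∑ l ∈ Finset.range (n₂+1),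
        (n₁.choose k : ℝ) * (n₂.choose l : ℝ) * (-a₁) ^ (n₁-k) * (-a₂) ^ (n₂-l) *
          ((k : ℝ) * fallingFactorial x (k+l-1)))
      + (∑ k ∈ Finset.range (n₁+1), ∑ l ∈ Finset.range (n₂+1),
        (n₁.choose k : ℝ) * (n₂.choose l : ℝ) * (-a₁) ^ (n₁-k) * (-a₂) ^ (n₂-l) *
          ((l : ℝ) * fallingFactorial x (k+l-1))) := by
    unfold charlier
    rw [← Finset.sum_sub_distrib, ← Finset.sum_add_distrib]
    apply Finset.sum_congr rfl; intro k _
    rw [← Finset.sum_sub_distrib, ← Finset.sum_add_distrib]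
    apply Finset.sum_congr rfl; intro l _
    rw [← mul_sub, ff_delta]
    push_cast
    ring
  rw [key, sum_k]
  congr 1
  have : (∑ k ∈ Finset.range (n₁+1), ∑ l ∈ Finset.range (n₂+1),
        (n₁.choose k : ℝ) * (n₂.choose l : ℝ) * (-a₁) ^ (n₁-k) * (-a₂) ^ (n₂-l) *
          ((l : ℝ) * fallingFactorial x (k+l-1)))
      = ∑ l ∈ Finset.range (n₂+1), ∑ k ∈ Finset.range (n₁+1),
        (n₂.choose l : ℝ) * (n₁.choose k : ℝ) * (-a₂) ^ (n₂-l) * (-a₁) ^ (n₁-k) *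
          ((l : ℝ) * fallingFactorial x (l+k-1)) := by
    rw [Finset.sum_comm]
    apply Finset.sum_congr rfl; intro l _
    apply Finset.sum_congr rfl; intro k _
    rw [Nat.add_comm l k]
    ring
  rw [this, sum_k, charlier_symm]
end
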